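/- For every set Γ of L(⊡)-formulas and every L(⊡)-formula φ, the following are equivalent: (a) Γ ⊢_{K5⊡} φ; (b) Γ ⊨ φ over the class of quasi-Euclidean bimodal frames; (c) Γ ⊨ φ over the class of pseudo-Euclidean bimodal frames. -/

import Mathlib

/-- Formulas of the language L(⊡): propositional variables, ¬, ∧, and ⊡ (`box`). -/
inductive Form : Type
  | var : ℕ → Form
  | neg : Form → Form
  | conj : Form → Form → Form
  | box : Form → Form

namespace Form
/-- Implication, defined as usual. -/
def imp (φ ψ : Form) : Form := neg (conj φ (neg ψ))
/-- Disjunction, defined as usual. -/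
def disj (φ ψ : Form) : Form := neg (conj (neg φ) (neg ψ))
/-- Biconditional, defined as usual. -/
def biff (φ ψ : Form) : Form := conj (imp φ ψ) (imp ψ φ)
/-- The constant ⊤. -/
def top : Form := imp (var 0) (var 0)
end Form

/-- A bimodal model: a nonempty set of worlds, two accessibility relations and a valuation. -/
structure BiModel : Type 1 where
  S : Type
  ne : Nonempty S
  R1 : S → S → Prop
  R2 : S → S → Prop
  V : ℕ → Set S

/-- Truth of a formula at a world: ⊡φ holds at s iff all R1-successors and
R2-successors of s agree on the truth value of φ. -/
def sat (M : BiModel) : M.S → Form → Prop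
  | s, .var n => s ∈ M.V n
  | s, .neg φ => ¬ sat M s φ
  | s, .conj φ ψ => sat M s φ ∧ sat M s ψ
  | s, .box φ => ∀ t u, M.R1 s t → M.R2 s u → (sat M t φ ↔ sat M u φ)

/-- Boolean evaluation treating boxed formulas as atoms (for defining tautologies). -/
def beval (v : Form → Bool) : Form → Bool
  | .var n => v (.var n)
  | .neg φ => !beval v φ
  | .conj φ ψ => beval v φ && beval v ψ
  | .box φ => v (.box φ)

/-- φ is an instance of a propositional tautology. -/
def Form.isTaut (φ : Form) : Prop := ∀ v : Form → Bool, beval v φ = true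

/-- Theorems of the system K⊡ extended with the extra axioms in `Ext`:
propositional tautologies, ⊡⊤, ⊡EQU, ⊡CON, ⊡DIS, extra axioms,
closed under modus ponens and RE⊡. -/
inductive KThm (Ext : Form → Prop) : Form → Prop
  | taut {φ : Form} : φ.isTaut → KThm Ext φ
  | boxTop : KThm Ext (Form.box Form.top)
  | equ (φ : Form) : KThm Ext ((Form.box φ).biff (Form.box (Form.neg φ)))
  | con (φ ψ : Form) :
      KThm Ext (((Form.box φ).conj (Form.box ψ)).imp (Form.box (φ.conj ψ)))
  | dis (φ ψ χ : Form) :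
      KThm Ext ((Form.box φ).imp
        ((Form.box (φ.disj ψ)).disj (Form.box ((Form.neg φ).disj χ))))
  | ext {φ : Form} : Ext φ → KThm Ext φ
  | mp {φ ψ : Form} : KThm Ext (φ.imp ψ) → KThm Ext φ → KThm Ext ψ
  | re {φ ψ : Form} : KThm Ext (φ.biff ψ) → KThm Ext ((Form.box φ).biff (Form.box ψ))

/-- Γ ⊢ φ: φ is derivable from theorems of the system together with premises
in Γ using modus ponens. -/
inductive Deriv (Ext : Form → Prop) (Γ : Set Form) : Form → Prop
  | thm {φ : Form} : KThm Ext φ → Deriv Ext Γ φ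
  | prem {φ : Form} : φ ∈ Γ → Deriv Ext Γ φ
  | mp {φ ψ : Form} : Deriv Ext Γ (φ.imp ψ) → Deriv Ext Γ φ → Deriv Ext Γ ψ

/-- No extra axioms: the minimal system K⊡. -/
def NoExt : Form → Prop := fun _ => False

/-- The two accessibility relations, indexed (index `true` is R1, `false` is R2). -/
def BiModel.rel (M : BiModel) : Bool → M.S → M.S → Prop
  | true => M.R1
  | false => M.R2

/-- A model is quasi-Euclidean: ∀ i j x y z, x R_i y ∧ x R_j z → y R_j z. -/
def QE (M : BiModel) : Prop :=
  ∀ (i j : Bool) (x y z : M.S), M.rel i x y → M.rel j x z → M.rel j y z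

/-- A model is pseudo-Euclidean: ∀ i j x y z, x R_i y ∧ x R_j z → y R1 z ∧ y R2 z. -/
def PE (M : BiModel) : Prop :=
  ∀ (i j : Bool) (x y z : M.S), M.rel i x y → M.rel j x z → M.R1 y z ∧ M.R2 y z

/-- Instances of the axiom ⊡5: ¬⊡φ → ⊡(¬⊡φ ∨ ψ). -/
def Ax5 : Form → Prop := fun θ =>
  ∃ φ ψ : Form,
    θ = (Form.neg (Form.box φ)).imp
      (Form.box ((Form.neg (Form.box φ)).disj ψ))

namespace Stmt19

/-! ### Syntactic machinery -/

/-- A fixed contradiction. -/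
def botF : Form := (Form.var 0).conj (Form.neg (Form.var 0))

/-- Theoremhood in K5⊡. -/
abbrev Thm (φ : Form) : Prop := KThm Ax5 φ

theorem taut_K (φ ψ : Form) : (φ.imp (ψ.imp φ)).isTaut := by
  intro v; simp only [Form.imp, Form.disj, Form.biff, Form.top, botF, beval]
  cases beval v φ <;> cases beval v ψ <;> rfl

theorem taut_S (φ ψ χ : Form) :
    ((φ.imp (ψ.imp χ)).imp ((φ.imp ψ).imp (φ.imp χ))).isTaut := by
  intro v; simp only [Form.imp, Form.disj, Form.biff, Form.top, botF, beval]
  cases beval v φ <;> cases beval v ψ <;> cases beval v χ <;> rfl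

theorem taut_id (φ : Form) : (φ.imp φ).isTaut := by
  intro v; simp only [Form.imp, Form.disj, Form.biff, Form.top, botF, beval]
  cases beval v φ <;> rfl

theorem taut_top : Form.top.isTaut := by
  intro v; simp only [Form.imp, Form.disj, Form.biff, Form.top, botF, beval]
  cases v (Form.var 0) <;> rfl

theorem taut_pair (φ ψ : Form) : (φ.imp (ψ.imp (φ.conj ψ))).isTaut := by
  intro v; simp only [Form.imp, Form.disj, Form.biff, Form.top, botF, beval]
  cases beval v φ <;> cases beval v ψ <;> rfl

theorem taut_andl (φ ψ : Form) : ((φ.conj ψ).imp φ).isTaut := by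
  intro v; simp only [Form.imp, Form.disj, Form.biff, Form.top, botF, beval]
  cases beval v φ <;> cases beval v ψ <;> rfl

theorem taut_andr (φ ψ : Form) : ((φ.conj ψ).imp ψ).isTaut := by
  intro v; simp only [Form.imp, Form.disj, Form.biff, Form.top, botF, beval]
  cases beval v φ <;> cases beval v ψ <;> rfl

theorem taut_exf (φ ψ : Form) : (φ.imp ((Form.neg φ).imp ψ)).isTaut := by
  intro v; simp only [Form.imp, Form.disj, Form.biff, Form.top, botF, beval]
  cases beval v φ <;> cases beval v ψ <;> rfl

theorem taut_both (φ : Form) :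
    ((φ.imp botF).imp (((Form.neg φ).imp botF).imp botF)).isTaut := by
  intro v; simp only [Form.imp, Form.disj, Form.biff, Form.top, botF, beval]
  cases beval v φ <;> cases v (Form.var 0) <;> rfl

theorem taut_comp (φ ψ χ : Form) :
    ((φ.imp ψ).imp ((ψ.imp χ).imp (φ.imp χ))).isTaut := by
  intro v; simp only [Form.imp, Form.disj, Form.biff, Form.top, botF, beval]
  cases beval v φ <;> cases beval v ψ <;> cases beval v χ <;> rfl

theorem taut_conj_mono (x a b : Form) :
    ((a.imp b).imp ((x.conj a).imp (x.conj b))).isTaut := by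
  intro v; simp only [Form.imp, Form.disj, Form.biff, Form.top, botF, beval]
  cases beval v x <;> cases beval v a <;> cases beval v b <;> rfl

theorem taut_disj_biff (φ ψ : Form) : ((φ.imp ψ).imp ((φ.disj ψ).biff ψ)).isTaut := by
  intro v; simp only [Form.imp, Form.disj, Form.biff, Form.top, botF, beval]
  cases beval v φ <;> cases beval v ψ <;> rfl

theorem taut_impbot (χ φ : Form) :
    ((χ.imp (φ.imp botF)).imp (χ.imp (Form.neg φ))).isTaut := by
  intro v; simp only [Form.imp, Form.disj, Form.biff, Form.top, botF, beval]
  cases beval v χ <;> cases beval v φ <;> cases v (Form.var 0) <;> rfl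

theorem taut_impbot' (χ φ : Form) :
    ((χ.imp ((Form.neg φ).imp botF)).imp (χ.imp φ)).isTaut := by
  intro v; simp only [Form.imp, Form.disj, Form.biff, Form.top, botF, beval]
  cases beval v χ <;> cases beval v φ <;> cases v (Form.var 0) <;> rfl

theorem taut_top_disj (ψ : Form) : ((Form.top.disj ψ).biff Form.top).isTaut := by
  intro v; simp only [Form.imp, Form.disj, Form.biff, Form.top, botF, beval]
  cases v (Form.var 0) <;> cases beval v ψ <;> rfl

theorem taut_distrib (a b ψ : Form) :
    (((a.disj ψ).conj (b.disj ψ)).biff ((a.conj b).disj ψ)).isTaut := by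
  intro v; simp only [Form.imp, Form.disj, Form.biff, Form.top, botF, beval]
  cases beval v a <;> cases beval v b <;> cases beval v ψ <;> rfl

theorem imp_intro_thm {φ : Form} (ψ : Form) (h : Thm φ) : Thm (ψ.imp φ) :=
  KThm.mp (KThm.taut (taut_K φ ψ)) h

theorem imp_trans {a b c : Form} (h1 : Thm (a.imp b)) (h2 : Thm (b.imp c)) :
    Thm (a.imp c) :=
  KThm.mp (KThm.mp (KThm.taut (taut_comp a b c)) h1) h2

theorem imp_comb {c a b : Form} (h1 : Thm (c.imp (a.imp b))) (h2 : Thm (c.imp a)) :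
    Thm (c.imp b) :=
  KThm.mp (KThm.mp (KThm.taut (taut_S c a b)) h1) h2

theorem biff_imp {a b : Form} (h : Thm (a.biff b)) : Thm (a.imp b) :=
  KThm.mp (KThm.taut (taut_andl _ _)) h

theorem biff_imp' {a b : Form} (h : Thm (a.biff b)) : Thm (b.imp a) :=
  KThm.mp (KThm.taut (taut_andr _ _)) h

/-- Deduction theorem. -/
theorem deduction {Γ : Set Form} {ψ φ : Form} (h : Deriv Ax5 (insert ψ Γ) φ) :
    Deriv Ax5 Γ (ψ.imp φ) := by
  induction h with
  | thm h => exact Deriv.mp (Deriv.thm (KThm.taut (taut_K _ _))) (Deriv.thm h)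
  | prem h =>
    rcases Set.mem_insert_iff.1 h with h | h
    · subst h; exact Deriv.thm (KThm.taut (taut_id _))
    · exact Deriv.mp (Deriv.thm (KThm.taut (taut_K _ _))) (Deriv.prem h)
  | mp _ _ ih1 ih2 =>
    exact Deriv.mp (Deriv.mp (Deriv.thm (KThm.taut (taut_S _ _ _))) ih1) ih2

/-- Conjunction of a list of formulas. -/
def conjList : List Form → Form
  | [] => Form.top
  | x :: L => x.conj (conjList L)

theorem conj_mono_right {a b : Form} (x : Form) (h : Thm (a.imp b)) :
    Thm ((x.conj a).imp (x.conj b)) :=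
  KThm.mp (KThm.taut (taut_conj_mono x a b)) h

theorem thm_conjList_imp_left (L1 L2 : List Form) :
    Thm ((conjList (L1 ++ L2)).imp (conjList L1)) := by
  induction L1 with
  | nil => exact imp_intro_thm _ (KThm.taut taut_top)
  | cons x L1 ih => exact conj_mono_right x ih

theorem thm_conjList_imp_right (L1 L2 : List Form) :
    Thm ((conjList (L1 ++ L2)).imp (conjList L2)) := by
  induction L1 with
  | nil => exact KThm.taut (taut_id _)
  | cons x L1 ih => exact imp_trans (KThm.taut (taut_andr _ _)) ih

/-- Compile a derivation into a theorem with a finite list of premises. -/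
theorem deriv_compile {Γ : Set Form} {φ : Form} (h : Deriv Ax5 Γ φ) :
    ∃ L : List Form, (∀ x ∈ L, x ∈ Γ) ∧ Thm ((conjList L).imp φ) := by
  induction h with
  | @thm φ h => exact ⟨[], by simp, imp_intro_thm _ h⟩
  | @prem φ h => exact ⟨[φ], by simpa using h, KThm.taut (taut_andl _ _)⟩
  | @mp φ ψ _ _ ih1 ih2 =>
    obtain ⟨L1, hL1, h1⟩ := ih1
    obtain ⟨L2, hL2, h2⟩ := ih2
    refine ⟨L1 ++ L2, ?_, ?_⟩
    · intro x hx; rcases List.mem_append.1 hx with hx | hx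
      · exact hL1 x hx
      · exact hL2 x hx
    · exact imp_comb (imp_trans (thm_conjList_imp_left L1 L2) h1)
        (imp_trans (thm_conjList_imp_right L1 L2) h2)

theorem deriv_conjList {Γ : Set Form} {L : List Form} (h : ∀ x ∈ L, x ∈ Γ) :
    Deriv Ax5 Γ (conjList L) := by
  induction L with
  | nil => exact Deriv.thm (KThm.taut taut_top)
  | cons x L ih =>
    exact Deriv.mp
      (Deriv.mp (Deriv.thm (KThm.taut (taut_pair _ _))) (Deriv.prem (h x (by simp))))
      (ih fun y hy => h y (by simp [hy]))

/-! ### Consistency, maximal consistent sets, Lindenbaum -/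

def Consistent (Γ : Set Form) : Prop := ¬ Deriv Ax5 Γ botF

def MCS (Δ : Set Form) : Prop := Consistent Δ ∧ ∀ φ, φ ∈ Δ ∨ Form.neg φ ∈ Δ

theorem MCS.mem_of_deriv {Δ : Set Form} (hΔ : MCS Δ) {φ : Form}
    (h : Deriv Ax5 Δ φ) : φ ∈ Δ := by
  by_contra hφ
  have hneg : Form.neg φ ∈ Δ := (hΔ.2 φ).resolve_left hφ
  exact hΔ.1 (Deriv.mp (Deriv.mp (Deriv.thm (KThm.taut (taut_exf φ botF))) h)
    (Deriv.prem hneg))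

theorem MCS.mem_of_thm {Δ : Set Form} (hΔ : MCS Δ) {φ : Form} (h : Thm φ) : φ ∈ Δ :=
  hΔ.mem_of_deriv (Deriv.thm h)

theorem MCS.mp {Δ : Set Form} (hΔ : MCS Δ) {φ ψ : Form}
    (h1 : φ.imp ψ ∈ Δ) (h2 : φ ∈ Δ) : ψ ∈ Δ :=
  hΔ.mem_of_deriv (Deriv.mp (Deriv.prem h1) (Deriv.prem h2))

theorem MCS.neg_mem_iff {Δ : Set Form} (hΔ : MCS Δ) {φ : Form} :
    Form.neg φ ∈ Δ ↔ φ ∉ Δ := by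
  constructor
  · intro hn hφ
    exact hΔ.1 (Deriv.mp (Deriv.mp (Deriv.thm (KThm.taut (taut_exf φ botF)))
      (Deriv.prem hφ)) (Deriv.prem hn))
  · intro hφ; exact (hΔ.2 φ).resolve_left hφ

theorem MCS.conj_mem_iff {Δ : Set Form} (hΔ : MCS Δ) {φ ψ : Form} :
    φ.conj ψ ∈ Δ ↔ φ ∈ Δ ∧ ψ ∈ Δ := by
  constructor
  · intro h
    exact ⟨hΔ.mem_of_deriv (Deriv.mp (Deriv.thm (KThm.taut (taut_andl _ _))) (Deriv.prem h)),
      hΔ.mem_of_deriv (Deriv.mp (Deriv.thm (KThm.taut (taut_andr _ _))) (Deriv.prem h))⟩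
  · rintro ⟨h1, h2⟩
    exact hΔ.mem_of_deriv (Deriv.mp (Deriv.mp (Deriv.thm (KThm.taut (taut_pair _ _)))
      (Deriv.prem h1)) (Deriv.prem h2))

theorem MCS.disj_mem_iff {Δ : Set Form} (hΔ : MCS Δ) {φ ψ : Form} :
    φ.disj ψ ∈ Δ ↔ φ ∈ Δ ∨ ψ ∈ Δ := by
  have : φ.disj ψ = Form.neg ((Form.neg φ).conj (Form.neg ψ)) := rfl
  rw [this, hΔ.neg_mem_iff, hΔ.conj_mem_iff, hΔ.neg_mem_iff, hΔ.neg_mem_iff]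
  tauto

theorem MCS.biff_mem {Δ : Set Form} (hΔ : MCS Δ) {φ ψ : Form}
    (h : Thm (φ.biff ψ)) : φ ∈ Δ ↔ ψ ∈ Δ :=
  ⟨fun hφ => hΔ.mp (hΔ.mem_of_thm (biff_imp h)) hφ,
   fun hψ => hΔ.mp (hΔ.mem_of_thm (biff_imp' h)) hψ⟩

/-- Lindenbaum lemma. -/
theorem lindenbaum {Γ0 : Set Form} (h : Consistent Γ0) :
    ∃ Δ, Γ0 ⊆ Δ ∧ MCS Δ := by
  obtain ⟨m, hm0, hmP, hmax⟩ :
      ∃ m, Γ0 ⊆ m ∧ Consistent m ∧ ∀ a, Consistent a → m ⊆ a → a ⊆ m := by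
    have hbound : ∀ c ⊆ {Δ | Consistent Δ}, IsChain (· ⊆ ·) c → c.Nonempty →
        ∃ ub ∈ {Δ | Consistent Δ}, ∀ s ∈ c, s ⊆ ub := by
      intro c hc hchain hcne
      refine ⟨⋃₀ c, ?_, fun s hs => Set.subset_sUnion_of_mem hs⟩
      intro hder
      obtain ⟨L, hL, hthm⟩ := deriv_compile hder
      -- find a single member of the chain containing all of L
      obtain ⟨m, hmc, hLm⟩ : ∃ m ∈ c, ∀ x ∈ L, x ∈ m := by
        clear hthm
        induction L with
        | nil => obtain ⟨m, hm⟩ := hcne; exact ⟨m, hm, by simp⟩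
        | cons x L ih =>
          obtain ⟨m, hmc, hLm⟩ := ih (fun y hy => hL y (by simp [hy]))
          obtain ⟨mx, hmxc, hxmx⟩ := hL x (by simp)
          rcases hchain.total hmc hmxc with hsub | hsub
          · exact ⟨mx, hmxc, by
              intro y hy
              rcases List.mem_cons.1 hy with rfl | hy
              · exact hxmx
              · exact hsub (hLm y hy)⟩
          · exact ⟨m, hmc, by
              intro y hy
              rcases List.mem_cons.1 hy with rfl | hy
              · exact hsub hxmx
              · exact hLm y hy⟩
      exact hc hmc (Deriv.mp (Deriv.thm hthm) (deriv_conjList hLm))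
    obtain ⟨m, hm0, hmax⟩ := zorn_subset_nonempty {Δ | Consistent Δ} hbound Γ0 h
    exact ⟨m, hm0, hmax.1, fun a ha hma => hmax.2 ha hma⟩
  refine ⟨m, hm0, hmP, ?_⟩
  intro φ
  by_contra hcon
  push_neg at hcon
  obtain ⟨h1, h2⟩ := hcon
  have i1 : ¬ Consistent (insert φ m) := by
    intro hcons
    exact h1 (hmax _ hcons (Set.subset_insert _ _) (Set.mem_insert _ _))
  have i2 : ¬ Consistent (insert (Form.neg φ) m) := by
    intro hcons
    exact h2 (hmax _ hcons (Set.subset_insert _ _) (Set.mem_insert _ _))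
  have d1 : Deriv Ax5 m (φ.imp botF) := deduction (not_not.1 i1)
  have d2 : Deriv Ax5 m ((Form.neg φ).imp botF) := deduction (not_not.1 i2)
  exact hmP (Deriv.mp (Deriv.mp (Deriv.thm (KThm.taut (taut_both φ))) d1) d2)

theorem taut_dne (φ : Form) : (((Form.neg φ).imp botF).imp φ).isTaut := by
  intro v; simp only [Form.imp, Form.disj, Form.biff, Form.top, botF, beval]
  cases beval v φ <;> cases v (Form.var 0) <;> rfl

/-! ### The canonical model -/

def Lam (s : Set Form) : Set Form := {χ | ∀ ψ : Form, Form.box (χ.disj ψ) ∈ s}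

theorem lam_top {s : Set Form} (hs : MCS s) : Form.top ∈ Lam s := by
  intro ψ
  have h2 : Thm ((Form.box (Form.top.disj ψ)).biff (Form.box Form.top)) :=
    KThm.re (KThm.taut (taut_top_disj ψ))
  exact (hs.biff_mem h2).2 (hs.mem_of_thm KThm.boxTop)

theorem lam_conj {s : Set Form} (hs : MCS s) {a b : Form}
    (ha : a ∈ Lam s) (hb : b ∈ Lam s) : a.conj b ∈ Lam s := by
  intro ψ
  have h1 : Form.box ((a.disj ψ).conj (b.disj ψ)) ∈ s :=
    hs.mp (hs.mem_of_thm (KThm.con _ _)) ((hs.conj_mem_iff).2 ⟨ha ψ, hb ψ⟩)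
  exact (hs.biff_mem (KThm.re (KThm.taut (taut_distrib a b ψ)))).1 h1

theorem lam_conjList {s : Set Form} (hs : MCS s) {L : List Form}
    (h : ∀ x ∈ L, x ∈ Lam s) : conjList L ∈ Lam s := by
  induction L with
  | nil => exact lam_top hs
  | cons x L ih => exact lam_conj hs (h x (by simp)) (ih fun y hy => h y (by simp [hy]))

theorem lam_insert_consistent {s : Set Form} (hs : MCS s) {φ : Form}
    (hbox : Form.box φ ∉ s) :
    Consistent (insert φ (Lam s)) ∧ Consistent (insert (Form.neg φ) (Lam s)) := by
  constructor
  · intro hder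
    obtain ⟨L, hL, hthm⟩ := deriv_compile (deduction hder)
    have hχ : conjList L ∈ Lam s := lam_conjList hs hL
    have h1 : Thm ((conjList L).imp (Form.neg φ)) :=
      KThm.mp (KThm.taut (taut_impbot _ φ)) hthm
    have h2 : Thm (((conjList L).disj (Form.neg φ)).biff (Form.neg φ)) :=
      KThm.mp (KThm.taut (taut_disj_biff _ _)) h1
    have h3 : Form.box (Form.neg φ) ∈ s :=
      (hs.biff_mem (KThm.re h2)).1 (hχ (Form.neg φ))
    exact hbox ((hs.biff_mem (KThm.equ φ)).2 h3)
  · intro hder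
    obtain ⟨L, hL, hthm⟩ := deriv_compile (deduction hder)
    have hχ : conjList L ∈ Lam s := lam_conjList hs hL
    have h1 : Thm ((conjList L).imp φ) :=
      KThm.mp (KThm.taut (taut_impbot' _ φ)) hthm
    have h2 : Thm (((conjList L).disj φ).biff φ) :=
      KThm.mp (KThm.taut (taut_disj_biff _ _)) h1
    exact hbox ((hs.biff_mem (KThm.re h2)).1 (hχ φ))

/-- The canonical model: worlds are maximal consistent sets, both relations are
the canonical one. -/
noncomputable def canM (hne : ∃ Δ, MCS Δ) : BiModel where
  S := {Δ : Set Form // MCS Δ}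
  ne := ⟨⟨hne.choose, hne.choose_spec⟩⟩
  R1 := fun s t => Lam s.1 ⊆ t.1
  R2 := fun s t => Lam s.1 ⊆ t.1
  V := fun n => {s | Form.var n ∈ s.1}

theorem lam_anti {x y : Set Form} (hx : MCS x) (hy : MCS y) (hxy : Lam x ⊆ y) :
    Lam y ⊆ Lam x := by
  intro χ hχ
  by_contra hnx
  simp only [Lam, Set.mem_setOf_eq, not_forall] at hnx
  obtain ⟨ψ0, hψ0⟩ := hnx
  have hneg : Form.neg (Form.box (χ.disj ψ0)) ∈ x := hx.neg_mem_iff.2 hψ0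
  have h5 : Form.neg (Form.box (χ.disj ψ0)) ∈ Lam x := by
    intro ψ'
    have hthm : Thm ((Form.neg (Form.box (χ.disj ψ0))).imp
        (Form.box ((Form.neg (Form.box (χ.disj ψ0))).disj ψ'))) :=
      KThm.ext ⟨χ.disj ψ0, ψ', rfl⟩
    exact hx.mp (hx.mem_of_thm hthm) hneg
  exact (hy.neg_mem_iff.1 (hxy h5)) (hχ ψ0)

theorem canM_PE (hne : ∃ Δ, MCS Δ) : PE (canM hne) := by
  intro i j x y z hxy hxz
  have h1 : Lam x.1 ⊆ y.1 := by cases i <;> exact hxy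
  have h2 : Lam x.1 ⊆ z.1 := by cases j <;> exact hxz
  have h3 : Lam y.1 ⊆ z.1 := (lam_anti x.2 y.2 h1).trans h2
  exact ⟨h3, h3⟩

theorem QE_of_PE {M : BiModel} (h : PE M) : QE M := by
  intro i j x y z h1 h2
  obtain ⟨ha, hb⟩ := h i j x y z h1 h2
  cases j
  · exact hb
  · exact ha

/-! ### Satisfaction lemmas -/

@[simp] theorem sat_neg {M : BiModel} {s : M.S} {φ : Form} :
    sat M s (Form.neg φ) ↔ ¬ sat M s φ := Iff.rfl

@[simp] theorem sat_conj {M : BiModel} {s : M.S} {φ ψ : Form} :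
    sat M s (φ.conj ψ) ↔ sat M s φ ∧ sat M s ψ := Iff.rfl

theorem sat_box {M : BiModel} {s : M.S} {φ : Form} :
    sat M s (Form.box φ) ↔
      ∀ t u, M.R1 s t → M.R2 s u → (sat M t φ ↔ sat M u φ) := Iff.rfl

@[simp] theorem sat_imp {M : BiModel} {s : M.S} {φ ψ : Form} :
    sat M s (φ.imp ψ) ↔ (sat M s φ → sat M s ψ) := by
  simp only [Form.imp, sat_neg, sat_conj]; tauto

@[simp] theorem sat_disj {M : BiModel} {s : M.S} {φ ψ : Form} :
    sat M s (φ.disj ψ) ↔ sat M s φ ∨ sat M s ψ := by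
  simp only [Form.disj, sat_neg, sat_conj]; tauto

@[simp] theorem sat_biff {M : BiModel} {s : M.S} {φ ψ : Form} :
    sat M s (φ.biff ψ) ↔ (sat M s φ ↔ sat M s ψ) := by
  simp only [Form.biff, sat_conj, sat_imp]; tauto

@[simp] theorem sat_top {M : BiModel} {s : M.S} : sat M s Form.top := by
  simp [Form.top]

/-! ### Truth lemma -/

theorem truth_lemma (hne : ∃ Δ, MCS Δ) :
    ∀ (φ : Form) (s : (canM hne).S), sat (canM hne) s φ ↔ φ ∈ s.1 := by
  intro φ
  induction φ with
  | var n => intro s; exact Iff.rfl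
  | neg φ ih =>
    intro s
    rw [sat_neg, ih s, ← s.2.neg_mem_iff]
  | conj φ ψ ih1 ih2 =>
    intro s
    rw [sat_conj, ih1 s, ih2 s, s.2.conj_mem_iff]
  | box φ ih =>
    intro s
    constructor
    · intro h
      by_contra hbox
      obtain ⟨c1, c2⟩ := lam_insert_consistent s.2 hbox
      obtain ⟨t, ht1, ht2⟩ := lindenbaum c1
      obtain ⟨u, hu1, hu2⟩ := lindenbaum c2
      have hRt : Lam s.1 ⊆ t := (Set.subset_insert _ _).trans ht1
      have hRu : Lam s.1 ⊆ u := (Set.subset_insert _ _).trans hu1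
      have hiff := h ⟨t, ht2⟩ ⟨u, hu2⟩ hRt hRu
      rw [ih ⟨t, ht2⟩, ih ⟨u, hu2⟩] at hiff
      have hφt : φ ∈ t := ht1 (Set.mem_insert _ _)
      have hφu : φ ∉ u := hu2.neg_mem_iff.1 (hu1 (Set.mem_insert _ _))
      exact hφu (hiff.1 hφt)
    · intro hbox
      intro t u hst hsu
      rw [ih t, ih u]
      by_cases hc : ∀ ψ, Form.box (φ.disj ψ) ∈ s.1
      · have hmem : φ ∈ Lam s.1 := hc
        simp [hst hmem, hsu hmem]
      · push_neg at hc
        obtain ⟨ψ0, hψ0⟩ := hc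
        have hall : Form.neg φ ∈ Lam s.1 := by
          intro χ
          have hd := s.2.mp (s.2.mem_of_thm (KThm.dis φ ψ0 χ)) hbox
          rcases (s.2.disj_mem_iff).1 hd with h | h
          · exact absurd h hψ0
          · exact h
        have h1 : φ ∉ t.1 := t.2.neg_mem_iff.1 (hst hall)
        have h2 : φ ∉ u.1 := u.2.neg_mem_iff.1 (hsu hall)
        simp [h1, h2]

/-! ### Soundness -/

theorem sat_of_taut {M : BiModel} {s : M.S} {φ : Form} (h : φ.isTaut) :
    sat M s φ := by
  classical
  let v : Form → Bool := fun ψ => decide (sat M s ψ)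
  have key : ∀ ψ, beval v ψ = true ↔ sat M s ψ := by
    intro ψ
    induction ψ with
    | var n => simp [beval, v, sat]; exact decide_eq_true_iff
    | neg ψ ih => simp only [beval, Bool.not_eq_true', ← Bool.not_eq_true, ih, sat_neg]
    | conj a b ih1 ih2 => simp [beval, ih1, ih2]
    | box ψ _ => simp [beval, v]
  exact (key φ).1 (h v)

theorem thm_sound {φ : Form} (h : Thm φ) :
    ∀ M : BiModel, QE M → ∀ s : M.S, sat M s φ := by
  induction h with
  | taut h => intro M _ s; exact sat_of_taut h
  | boxTop => intro M _ s; intro t u _ _; simp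
  | equ φ =>
    intro M _ s
    rw [sat_biff, sat_box, sat_box]
    constructor <;> intro h t u h1 h2
    · simpa [sat_neg] using not_iff_not.2 (h t u h1 h2)
    · simpa using not_iff_not.1 (by simpa [sat_neg] using h t u h1 h2)
  | con φ ψ =>
    intro M _ s
    rw [sat_imp]
    intro h
    obtain ⟨h1, h2⟩ := sat_conj.1 h
    intro t u ht hu
    exact and_congr (h1 t u ht hu) (h2 t u ht hu)
  | dis φ ψ χ =>
    intro M _ s
    rw [sat_imp]
    intro hφ
    rw [sat_disj]
    by_cases h1 : sat M s (Form.box (φ.disj ψ))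
    · left; exact h1
    · right
      rw [sat_box] at h1
      push_neg at h1
      obtain ⟨t0, u0, ht0, hu0, hne⟩ := h1
      have hft0 : ¬ sat M t0 φ := by
        intro hf
        have h00 := (hφ t0 u0 ht0 hu0).1 hf
        rcases hne with ⟨_, hn⟩ | ⟨hn, _⟩
        · exact hn (sat_disj.2 (Or.inl h00))
        · exact hn (sat_disj.2 (Or.inl hf))
      have hfu0 : ¬ sat M u0 φ := fun hf => hft0 ((hφ t0 u0 ht0 hu0).2 hf)
      intro t u ht hu
      have h1t : ¬ sat M t φ := fun hf => hfu0 ((hφ t u0 ht hu0).1 hf)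
      have h1u : ¬ sat M u φ := fun hf => hft0 ((hφ t0 u ht0 hu).2 hf)
      simp [sat_disj, h1t, h1u]
  | ext h =>
    obtain ⟨a, b, rfl⟩ := h
    intro M hM s
    rw [sat_imp]
    intro hn
    rw [sat_neg, sat_box] at hn
    push_neg at hn
    obtain ⟨t0, u0, ht0, hu0, hd⟩ := hn
    have key : ∀ (i : Bool) (y : M.S), M.rel i s y → ¬ sat M y (Form.box a) := by
      intro i y hy hbox
      have hiff := hbox t0 u0 (hM i true s y t0 hy ht0) (hM i false s y u0 hy hu0)
      rcases hd with ⟨p, q⟩ | ⟨p, q⟩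
      · exact q (hiff.1 p)
      · exact p (hiff.2 q)
    intro t u ht hu
    have ht' : ¬ sat M t (Form.box a) := key true t ht
    have hu' : ¬ sat M u (Form.box a) := key false u hu
    simp [sat_disj, ht', hu']
  | mp _ _ ih1 ih2 =>
    intro M hM s
    exact sat_imp.1 (ih1 M hM s) (ih2 M hM s)
  | re _ ih =>
    intro M hM s
    rw [sat_biff, sat_box, sat_box]
    have key : ∀ w, sat M w _ ↔ sat M w _ := fun w => sat_biff.1 (ih M hM w)
    constructor <;> intro hb t u ht hu
    · exact (key t).symm.trans ((hb t u ht hu).trans (key u))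
    · exact (key t).trans ((hb t u ht hu).trans (key u).symm)

theorem deriv_sound {Γ : Set Form} {φ : Form} (h : Deriv Ax5 Γ φ) :
    ∀ M : BiModel, QE M → ∀ s : M.S, (∀ γ ∈ Γ, sat M s γ) → sat M s φ := by
  induction h with
  | thm h => intro M hM s _; exact thm_sound h M hM s
  | prem h => intro M _ s hΓ; exact hΓ _ h
  | mp _ _ ih1 ih2 =>
    intro M hM s hΓ
    exact sat_imp.1 (ih1 M hM s hΓ) (ih2 M hM s hΓ)

/-! ### Completeness -/

theorem completeness {Γ : Set Form} {φ : Form}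
    (h : ∀ M : BiModel, PE M → ∀ s : M.S, (∀ γ ∈ Γ, sat M s γ) → sat M s φ) :
    Deriv Ax5 Γ φ := by
  by_contra hd
  have hcons : Consistent (insert (Form.neg φ) Γ) := by
    intro hder
    exact hd (Deriv.mp (Deriv.thm (KThm.taut (taut_dne φ))) (deduction hder))
  obtain ⟨Δ, hsub, hΔ⟩ := lindenbaum hcons
  have hne : ∃ Δ, MCS Δ := ⟨Δ, hΔ⟩
  have hsat := h (canM hne) (canM_PE hne) ⟨Δ, hΔ⟩ (by
    intro γ hγ
    exact (truth_lemma hne γ ⟨Δ, hΔ⟩).2 (hsub (Set.mem_insert_of_mem _ hγ)))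
  have hmem : φ ∈ Δ := (truth_lemma hne φ ⟨Δ, hΔ⟩).1 hsat
  exact hΔ.neg_mem_iff.1 (hsub (Set.mem_insert _ _)) hmem

end Stmt19
/-- For K5⊡ = K⊡ + ⊡5, the following are equivalent: (a) Γ ⊢_{K5⊡} φ;
(b) Γ ⊨ φ over quasi-Euclidean frames; (c) Γ ⊨ φ over pseudo-Euclidean frames. -/
theorem stmt19 (Γ : Set Form) (φ : Form) :
    (Deriv Ax5 Γ φ ↔
      ∀ (M : BiModel), QE M → ∀ s : M.S, (∀ γ ∈ Γ, sat M s γ) → sat M s φ) ∧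
    (Deriv Ax5 Γ φ ↔
      ∀ (M : BiModel), PE M → ∀ s : M.S, (∀ γ ∈ Γ, sat M s γ) → sat M s φ) := by
  constructor
  · constructor
    · intro hd M hM s hs
      exact Stmt19.deriv_sound hd M hM s hs
    · intro hval
      exact Stmt19.completeness fun M hPE s hs => hval M (Stmt19.QE_of_PE hPE) s hs
  · constructor
    · intro hd M hM s hs
      exact Stmt19.deriv_sound hd M (Stmt19.QE_of_PE hM) s hs
    · intro hval
      exact Stmt19.completeness hval
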